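/- For every positive integer k and every integer r ≥ 2, every family of k-element sets with Littlestone dimension at most 1 and cardinality at least k + r - 1 contains an r-sunflower. -/

import Mathlib

open Finset

variable {α : Type*}

/-- An `r`-sunflower: `r` distinct sets with pairwise equal intersections. -/
def IsSunflower [DecidableEq α] (r : ℕ) (𝒮 : Finset (Finset α)) : Prop :=
  𝒮.card = r ∧ ∃ C : Finset α, ∀ A ∈ 𝒮, ∀ B ∈ 𝒮, A ≠ B → A ∩ B = C

/-- The family `F` contains an `r`-sunflower. -/
def HasSunflower [DecidableEq α] (F : Finset (Finset α)) (r : ℕ) : Prop :=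
  ∃ 𝒮 ⊆ F, IsSunflower r 𝒮

/-- `F` shatters `S`: every subset of `S` is the trace of some member of `F` on `S`. -/
def ShattersFam [DecidableEq α] (F : Finset (Finset α)) (S : Finset α) : Prop :=
  ∀ B ⊆ S, ∃ A ∈ F, A ∩ S = B

/-- The VC-dimension of `F` is at most `d`. -/
def VCdimLE [DecidableEq α] (F : Finset (Finset α)) (d : ℕ) : Prop :=
  ∀ S : Finset α, ShattersFam F S → S.card ≤ d

/-- The Littlestone dimension of `F` is at most `d` (recursive definition). -/
def LdimLE [DecidableEq α] : ℕ → Finset (Finset α) → Prop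
  | 0, F => F.card ≤ 1
  | d + 1, F => F.card ≤ 1 ∨ ∀ x : α,
      LdimLE d ((F.filter (fun S => x ∈ S)).image (fun S => S.erase x)) ∨
      LdimLE d (F.filter (fun S => x ∉ S))

/-- `λ(G) ≥ l`: there are `l` distinct sets in `G` such that every pair has a
private common element, belonging to no other of the `l` sets. -/
def HasLambda [DecidableEq α] (G : Finset (Finset α)) (l : ℕ) : Prop :=
  ∃ S : Fin l → Finset α, (∀ i, S i ∈ G) ∧ Function.Injective S ∧
    ∀ i j : Fin l, i < j → ∃ v, v ∈ S i ∧ v ∈ S j ∧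
      ∀ t : Fin l, t ≠ i → t ≠ j → v ∉ S t

/-- Dichotomy: every element is in at most one set, or omitted by at most one set. -/
def PFam [DecidableEq α] (F : Finset (Finset α)) : Prop :=
  ∀ x : α, (F.filter (fun S => x ∈ S)).card ≤ 1 ∨ (F.filter (fun S => x ∉ S)).card ≤ 1

lemma erase_injOn_filter [DecidableEq α] (F : Finset (Finset α)) (x : α) :
    Set.InjOn (fun S => S.erase x) ((F.filter (fun S => x ∈ S) : Finset (Finset α)) : Set (Finset α)) := by
  intro S hS T hT h
  simp only [coe_filter, Set.mem_setOf_eq] at hS hT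
  have h2 : insert x (S.erase x) = insert x (T.erase x) := by
    simpa using congrArg (insert x) h
  rwa [Finset.insert_erase hS.2, Finset.insert_erase hT.2] at h2

lemma ldim_to_P [DecidableEq α] (F : Finset (Finset α)) (h2 : 2 ≤ F.card)
    (h : LdimLE 1 F) : PFam F := by
  simp only [LdimLE] at h
  rcases h with h | h
  · omega
  · intro x
    rcases h x with h | h
    · left
      have hc := Finset.card_image_of_injOn (erase_injOn_filter F x)
      omega
    · right; exact h

lemma P_sunflower [DecidableEq α] (r : ℕ) (hr : 2 ≤ r) :
    ∀ k, 1 ≤ k → ∀ F : Finset (Finset α), (∀ S ∈ F, S.card = k) → PFam F →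
      k + r - 1 ≤ F.card → HasSunflower F r := by
  intro k
  induction k with
  | zero => omega
  | succ m ih =>
    intro _ F hsz hP hcard
    by_cases hall : ∀ x : α, (F.filter (fun S => x ∈ S)).card ≤ 1
    · -- all sets pairwise disjoint
      obtain ⟨𝒮, h𝒮F, h𝒮card⟩ := Finset.exists_subset_card_eq (show r ≤ F.card by omega)
      refine ⟨𝒮, h𝒮F, h𝒮card, ∅, fun A hA B hB hAB => ?_⟩
      rw [Finset.eq_empty_iff_forall_notMem]
      intro v hv
      rw [Finset.mem_inter] at hv
      have hA' : A ∈ F.filter (fun S => v ∈ S) := mem_filter.mpr ⟨h𝒮F hA, hv.1⟩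
      have hB' : B ∈ F.filter (fun S => v ∈ S) := mem_filter.mpr ⟨h𝒮F hB, hv.2⟩
      have h2 : 1 < (F.filter (fun S => v ∈ S)).card :=
        Finset.one_lt_card.mpr ⟨A, hA', B, hB', hAB⟩
      have := hall v
      omega
    · push_neg at hall
      obtain ⟨x, hx⟩ := hall
      have hx2 : 2 ≤ (F.filter (fun S => x ∈ S)).card := by omega
      have hout : (F.filter (fun S => x ∉ S)).card ≤ 1 := (hP x).resolve_left (by omega)
      rcases Nat.eq_zero_or_pos m with hm | hm
      · -- k = 1 : impossible to have two distinct singletons containing x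
        exfalso
        obtain ⟨A, hA, B, hB, hAB⟩ := Finset.one_lt_card.mp hx2
        simp only [mem_filter] at hA hB
        have hA1 : ∀ y ∈ A, y = x := fun y hy =>
          Finset.card_le_one.mp (le_of_eq (by rw [hsz A hA.1, hm])) y hy x hA.2
        have hB1 : ∀ y ∈ B, y = x := fun y hy =>
          Finset.card_le_one.mp (le_of_eq (by rw [hsz B hB.1, hm])) y hy x hB.2
        apply hAB
        rw [Finset.eq_singleton_iff_unique_mem.mpr ⟨hA.2, hA1⟩,
          Finset.eq_singleton_iff_unique_mem.mpr ⟨hB.2, hB1⟩]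
      · set F' := (F.filter (fun S => x ∈ S)).image (fun S => S.erase x) with hF'
        have hcard' : F'.card = (F.filter (fun S => x ∈ S)).card :=
          Finset.card_image_of_injOn (erase_injOn_filter F x)
        have htot := Finset.card_filter_add_card_filter_not
          (s := F) (p := fun S => x ∈ S)
        have hmem : ∀ S ∈ F', x ∉ S ∧ insert x S ∈ F := by
          intro S hS
          obtain ⟨T, hT, rfl⟩ := mem_image.mp hS
          simp only [mem_filter] at hT
          exact ⟨notMem_erase x T, by rw [Finset.insert_erase hT.2]; exact hT.1⟩
        have hsz' : ∀ S ∈ F', S.card = m := by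
          intro S hS
          obtain ⟨T, hT, rfl⟩ := mem_image.mp hS
          simp only [mem_filter] at hT
          rw [Finset.card_erase_of_mem hT.2, hsz T hT.1]
          omega
        have hP' : PFam F' := by
          intro y
          by_cases hyx : y = x
          · left
            subst hyx
            have he : F'.filter (fun S => y ∈ S) = ∅ :=
              Finset.filter_eq_empty_iff.mpr (fun S hS => (hmem S hS).1)
            rw [he]; simp
          · have hinj : Set.InjOn (insert x) ((F'.filter (fun S => y ∈ S) : Finset (Finset α)) : Set (Finset α)) ∧
                Set.InjOn (insert x) ((F'.filter (fun S => y ∉ S) : Finset (Finset α)) : Set (Finset α)) := by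
              constructor <;>
              · intro S hS T hT h
                simp only [coe_filter, Set.mem_setOf_eq] at hS hT
                rw [← Finset.erase_insert (hmem S hS.1).1, h,
                  Finset.erase_insert (hmem T hT.1).1]
            rcases hP y with h | h
            · left
              refine le_trans (Finset.card_le_card_of_injOn (insert x) ?_ hinj.1) h
              intro S hS
              simp only [mem_filter, Finset.mem_coe] at hS ⊢
              exact ⟨(hmem S hS.1).2, Finset.mem_insert_of_mem hS.2⟩
            · right
              refine le_trans (Finset.card_le_card_of_injOn (insert x) ?_ hinj.2) h
              intro S hS
              simp only [mem_filter, Finset.mem_coe] at hS ⊢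
              refine ⟨(hmem S hS.1).2, ?_⟩
              simp [Finset.mem_insert, hyx, hS.2]
        obtain ⟨𝒮', h𝒮'sub, h𝒮'card, C, hC⟩ :=
          ih hm F' hsz' hP' (by omega)
        have hinj𝒮 : Set.InjOn (insert x) (𝒮' : Set (Finset α)) := by
          intro S hS T hT h
          rw [← Finset.erase_insert (hmem S (h𝒮'sub hS)).1, h,
            Finset.erase_insert (hmem T (h𝒮'sub hT)).1]
        refine ⟨𝒮'.image (insert x), ?_, ?_, insert x C, ?_⟩
        · intro A hA
          obtain ⟨S, hS, rfl⟩ := mem_image.mp hA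
          exact (hmem S (h𝒮'sub hS)).2
        · rw [Finset.card_image_of_injOn hinj𝒮, h𝒮'card]
        · intro A hA B hB hAB
          obtain ⟨S, hS, rfl⟩ := mem_image.mp hA
          obtain ⟨T, hT, rfl⟩ := mem_image.mp hB
          have hST : S ≠ T := fun h => hAB (by rw [h])
          have : insert x S ∩ insert x T = insert x (S ∩ T) := by
            ext y
            simp only [Finset.mem_inter, Finset.mem_insert]
            tauto
          rw [this, hC S hS T hT hST]

theorem littlestone_one_sunflower {α : Type*} [DecidableEq α] (k r : ℕ)
    (hk : 1 ≤ k) (hr : 2 ≤ r) (F : Finset (Finset α))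
    (hsz : ∀ S ∈ F, S.card = k) (hls : LdimLE 1 F)
    (hcard : k + r - 1 ≤ F.card) : HasSunflower F r :=
  P_sunflower r hr k hk F hsz (ldim_to_P F (by omega) hls) hcard
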